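/- arXiv:1705.07256 — 2 statements merged into one kernel-verified Lean document; each statement's English description precedes it below -/
import Mathlib

section
/- Let C = {β ∈ ℝ^{p_bin} : at most s_G of the blocks β^j are nonzero, each block β^j lies in a closed cone S_j}, where β is partitioned into p blocks. Let p_L be the vector whose j-th block is the projection of x^j onto S_j. Then the projection of x onto C is obtained by keeping the s_G blocks of p_L with largest ℓ₂ norms and zeroing out the rest. Equivalently, P_C(x) = P_G(blockwise projections of x), using the cone-projection identity ‖x^j‖² = ‖P_{S_j}(x^j)‖² + ‖x^j − P_{S_j}(x^j)‖². -/
open scoped Classical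

/-- `p` is a nearest point of `x` in `S`. -/
def IsNearestPt {E : Type*} [MetricSpace E] (S : Set E) (x p : E) : Prop :=
  p ∈ S ∧ ∀ q ∈ S, dist x p ≤ dist x q

/-- Cone projection identity: `⟪y, q⟫ = ‖q‖²` for a nearest point `q` of `y` in a cone. -/
lemma cone_proj_id {E : Type*} [NormedAddCommGroup E] [InnerProductSpace ℝ E]
    (S : Set E) (hScone : ∀ c : ℝ, 0 ≤ c → ∀ v ∈ S, c • v ∈ S)
    (y q : E) (hq : IsNearestPt S y q) :
    ‖y‖ ^ 2 = ‖q‖ ^ 2 + ‖y - q‖ ^ 2 := by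
  have key : ∀ c : ℝ, 0 ≤ c → ‖y - q‖ ^ 2 ≤ ‖y - c • q‖ ^ 2 := by
    intro c hc
    have h := hq.2 (c • q) (hScone c hc q hq.1)
    rw [dist_eq_norm, dist_eq_norm] at h
    exact pow_le_pow_left₀ (norm_nonneg _) h 2
  set A : ℝ := inner ℝ y q with hA
  set B : ℝ := ‖q‖ ^ 2 with hB
  have expand : ∀ c : ℝ, 0 ≤ c →
      ‖y‖ ^ 2 - 2 * A + B ≤ ‖y‖ ^ 2 - 2 * (c * A) + c ^ 2 * B := by
    intro c hc
    have h := key c hc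
    rw [norm_sub_sq_real, norm_sub_sq_real, real_inner_smul_right, norm_smul] at h
    calc ‖y‖ ^ 2 - 2 * A + B = ‖y‖ ^ 2 - 2 * inner ℝ y q + ‖q‖ ^ 2 := by rw [hA, hB]
      _ ≤ ‖y‖ ^ 2 - 2 * (c * inner ℝ y q) + (‖c‖ * ‖q‖) ^ 2 := h
      _ = ‖y‖ ^ 2 - 2 * (c * A) + c ^ 2 * B := by
          rw [Real.norm_eq_abs, abs_of_nonneg hc]; ring
  have hBnn : (0 : ℝ) ≤ B := sq_nonneg _
  have hAB : A = B := by
    have h0 := expand 0 le_rfl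
    have hA0 : 0 ≤ A := by nlinarith
    rcases eq_or_lt_of_le hBnn with hB0 | hBpos
    · have hq0 : q = 0 := by
        rw [hB] at hB0
        have : ‖q‖ = 0 := by nlinarith [sq_nonneg ‖q‖]
        simpa using this
      rw [hA, hB, hq0]; simp
    · have h1 := expand (A / B) (div_nonneg hA0 (le_of_lt hBpos))
      have h2 : (A / B) ^ 2 * B = A ^ 2 / B := by field_simp
      have h3 : (A / B) * A = A ^ 2 / B := by field_simp
      rw [h2, h3] at h1
      have h4 : B * B - 2 * A * B + A ^ 2 ≤ 0 := by
        have := mul_le_mul_of_nonneg_right h1 (le_of_lt hBpos)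
        have h5 : A ^ 2 / B * B = A ^ 2 := by field_simp
        nlinarith
      have h6 : (A - B) ^ 2 ≤ 0 := by nlinarith
      have h7 : (A - B) ^ 2 = 0 := le_antisymm h6 (sq_nonneg _)
      have := sq_eq_zero_iff.mp h7
      linarith
  rw [norm_sub_sq_real, ← hA, ← hB, hAB]; ring

/-- Sum over any set of card at most that of `T` is at most the sum over the top set `T`. -/
lemma sum_le_sum_top {α : Type*} [DecidableEq α] (w : α → ℝ) (hw : ∀ a, 0 ≤ w a)
    (T U : Finset α) (hcard : U.card ≤ T.card)
    (htop : ∀ j ∈ T, ∀ k ∉ T, w k ≤ w j) :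
    ∑ j ∈ U, w j ≤ ∑ j ∈ T, w j := by
  have hUT : (U \ T).card ≤ (T \ U).card := by
    have h1 : (U \ T).card = U.card - (U ∩ T).card := by
      rw [Finset.card_sdiff_add_card_inter U T |>.symm]; omega
    have h2 : (T \ U).card = T.card - (T ∩ U).card := by
      rw [Finset.card_sdiff_add_card_inter T U |>.symm]; omega
    have h3 : (U ∩ T).card = (T ∩ U).card := by rw [Finset.inter_comm]
    have h4 : (U ∩ T).card ≤ U.card := Finset.card_le_card Finset.inter_subset_left
    omega
  have key : ∑ j ∈ U \ T, w j ≤ ∑ j ∈ T \ U, w j := by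
    obtain ⟨V, hVsub, hVcard⟩ := Finset.exists_subset_card_eq hUT
    rcases Finset.eq_empty_or_nonempty (U \ T) with he | hne
    · rw [he]; simp
      exact Finset.sum_nonneg fun j _ => hw j
    · have hVne : V.Nonempty := by
        rw [← Finset.card_pos, hVcard, Finset.card_pos]; exact hne
      obtain ⟨v, hvV, hvmin⟩ := V.exists_min_image w hVne
      have hvT : v ∈ T := (Finset.mem_sdiff.mp (hVsub hvV)).1
      have step1 : ∑ j ∈ U \ T, w j ≤ (U \ T).card • w v := by
        apply Finset.sum_le_card_nsmul
        intro u hu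
        exact htop v hvT u (Finset.mem_sdiff.mp hu).2
      have step2 : V.card • w v ≤ ∑ j ∈ V, w j :=
        Finset.card_nsmul_le_sum V w (w v) fun j hj => hvmin j hj
      have step3 : ∑ j ∈ V, w j ≤ ∑ j ∈ T \ U, w j :=
        Finset.sum_le_sum_of_subset_of_nonneg hVsub fun j _ _ => hw j
      calc ∑ j ∈ U \ T, w j ≤ (U \ T).card • w v := step1
        _ = V.card • w v := by rw [hVcard]
        _ ≤ ∑ j ∈ V, w j := step2
        _ ≤ ∑ j ∈ T \ U, w j := step3
  have hU : ∑ j ∈ U, w j = ∑ j ∈ U ∩ T, w j + ∑ j ∈ U \ T, w j :=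
    (Finset.sum_inter_add_sum_sdiff U T w).symm
  have hT : ∑ j ∈ T, w j = ∑ j ∈ T ∩ U, w j + ∑ j ∈ T \ U, w j :=
    (Finset.sum_inter_add_sum_sdiff T U w).symm
  rw [hU, hT, Finset.inter_comm]
  linarith

/-- Projection onto the set of `s_G`-block-sparse vectors with blocks in closed cones `S_j`
is given by blockwise cone projection followed by hard-thresholding the blocks of
largest norm. -/
theorem stmt_12 {p : ℕ} (b : Fin p → ℕ) (sG : ℕ)
    (S : ∀ j : Fin p, Set (EuclideanSpace ℝ (Fin (b j))))
    (hSclosed : ∀ j, IsClosed (S j)) (hS0 : ∀ j, (0 : EuclideanSpace ℝ (Fin (b j))) ∈ S j)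
    (hScone : ∀ j, ∀ c : ℝ, 0 ≤ c → ∀ v ∈ S j, c • v ∈ S j)
    (x pL : PiLp 2 (fun j : Fin p => EuclideanSpace ℝ (Fin (b j))))
    (hpL : ∀ j, IsNearestPt (S j) (x j) (pL j))
    (T : Finset (Fin p)) (hTcard : T.card = min sG p)
    (hTtop : ∀ j ∈ T, ∀ k ∉ T, ‖pL k‖ ≤ ‖pL j‖) :
    IsNearestPt
      {β : PiLp 2 (fun j : Fin p => EuclideanSpace ℝ (Fin (b j))) |
        (Finset.univ.filter fun j => β j ≠ 0).card ≤ sG ∧ ∀ j, β j ∈ S j}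
      x (WithLp.toLp 2 (fun j => if j ∈ T then pL j else 0)) := by
  classical
  set β₀ : PiLp 2 (fun j : Fin p => EuclideanSpace ℝ (Fin (b j))) :=
    WithLp.toLp 2 (fun j => if j ∈ T then pL j else 0) with hβ₀
  -- identity: ‖x j‖² = ‖pL j‖² + ‖x j - pL j‖²
  have hid : ∀ j, ‖x j‖ ^ 2 = ‖pL j‖ ^ 2 + ‖x j - pL j‖ ^ 2 := fun j =>
    cone_proj_id (S j) (hScone j) (x j) (pL j) (hpL j)
  constructor
  · constructor
    · calc (Finset.univ.filter fun j => β₀ j ≠ 0).card ≤ T.card := by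
            apply Finset.card_le_card
            intro j hj
            rw [Finset.mem_filter] at hj
            by_contra hjT
            exact hj.2 (by simp [hβ₀, hjT])
        _ ≤ sG := by omega
    · intro j
      by_cases hj : j ∈ T
      · simpa [hβ₀, hj] using (hpL j).1
      · simpa [hβ₀, hj] using hS0 j
  · intro β hβ
    obtain ⟨hcard, hmem⟩ := hβ
    set U : Finset (Fin p) := Finset.univ.filter fun j => β j ≠ 0 with hU
    rw [dist_eq_norm, dist_eq_norm]
    rw [← pow_le_pow_iff_left₀ (norm_nonneg _) (norm_nonneg _) two_ne_zero]
    rw [PiLp.norm_sq_eq_of_L2, PiLp.norm_sq_eq_of_L2]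
    have hsub : ∀ (u v : PiLp 2 (fun j : Fin p => EuclideanSpace ℝ (Fin (b j)))) (j : Fin p),
        (u - v) j = u j - v j := fun u v j => rfl
    simp only [hsub]
    have hUcard : U.card ≤ T.card := by
      have h1 : U.card ≤ p := by
        calc U.card ≤ (Finset.univ : Finset (Fin p)).card := Finset.card_le_card (Finset.filter_subset _ _)
          _ = p := by simp
      omega
    have hsum : ∑ j ∈ U, ‖pL j‖ ^ 2 ≤ ∑ j ∈ T, ‖pL j‖ ^ 2 := by
      apply sum_le_sum_top _ (fun a => sq_nonneg _) _ _ hUcard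
      intro j hj k hk
      exact pow_le_pow_left₀ (norm_nonneg _) (hTtop j hj k hk) 2
    have hL : ∑ j, ‖x j - β₀ j‖ ^ 2
        = ∑ j, ‖x j‖ ^ 2 - ∑ j ∈ T, ‖pL j‖ ^ 2 := by
      have : ∀ j, ‖x j - β₀ j‖ ^ 2 = ‖x j‖ ^ 2 - (if j ∈ T then ‖pL j‖ ^ 2 else 0) := by
        intro j
        by_cases hj : j ∈ T
        · simp only [hβ₀, hj, if_true]
          have := hid j; linarith
        · simp [hβ₀, hj]
      rw [Finset.sum_congr rfl fun j _ => this j, Finset.sum_sub_distrib,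
        Finset.sum_ite_mem, Finset.univ_inter]
    have hR : ∑ j, ‖x j‖ ^ 2 - ∑ j ∈ U, ‖pL j‖ ^ 2 ≤ ∑ j, ‖x j - β j‖ ^ 2 := by
      have hterm : ∀ j, ‖x j‖ ^ 2 - (if j ∈ U then ‖pL j‖ ^ 2 else 0) ≤ ‖x j - β j‖ ^ 2 := by
        intro j
        by_cases hj : j ∈ U
        · simp only [hj, if_true]
          have hle : ‖x j - pL j‖ ≤ ‖x j - β j‖ := by
            have := (hpL j).2 (β j) (hmem j)
            rwa [dist_eq_norm, dist_eq_norm] at this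
          have := pow_le_pow_left₀ (norm_nonneg _) hle 2
          have := hid j; linarith
        · have hb0 : β j = 0 := by
            by_contra hne
            exact hj (by simp [hU, hne])
          simp [hb0, hj]
      calc ∑ j, ‖x j‖ ^ 2 - ∑ j ∈ U, ‖pL j‖ ^ 2
          = ∑ j, (‖x j‖ ^ 2 - (if j ∈ U then ‖pL j‖ ^ 2 else 0)) := by
            rw [Finset.sum_sub_distrib, Finset.sum_ite_mem, Finset.univ_inter]
        _ ≤ ∑ j, ‖x j - β j‖ ^ 2 := Finset.sum_le_sum fun j _ => hterm j
    rw [hL]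
    linarith
end

section
/- Let C ⊆ ℝ^d be a closed cone, and let β_★ ∈ C. Suppose L is differentiable and satisfies the restricted gradient correlation condition over C with parameters μ_R, ε_R where ε_R < 1/2, and suppose β_★ satisfies the first-order optimality condition inf_{w ∈ T, ‖w‖≤1} ⟨w, ∇L(β_★)⟩ ≥ 0 where T is the tangent cone of C at β_★. Assume further the projection bound ‖P_{C−{β_★}}(u)‖ ≤ 2‖P_T(u)‖ for all u. Then the projected gradient iterates β_{t+1} = P_C(β_t − μ_R ∇L(β_t)), started at β_0 = 0, satisfy ‖β_t − β_★‖ ≤ (2ε_R)^t ‖β_★‖ for all t ≥ 0. -/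
open RealInnerProductSpace

/-- Linear convergence of projected gradient descent under the restricted gradient
correlation condition with `ε_R < 1/2`: starting from `β₀ = 0`, the iterates
`β_{t+1} = P_C(β_t − μ_R ∇L(β_t))` satisfy `‖β_t − β_★‖ ≤ (2ε_R)^t ‖β_★‖`. -/
theorem stmt_13 {d : ℕ} (C : Set (EuclideanSpace ℝ (Fin d)))
    (hCclosed : IsClosed C)
    (hCcone : ∀ c : ℝ, 0 ≤ c → ∀ v ∈ C, c • v ∈ C)
    (βs : EuclideanSpace ℝ (Fin d)) (hβs : βs ∈ C)
    (L : EuclideanSpace ℝ (Fin d) → ℝ)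
    (gradL : EuclideanSpace ℝ (Fin d) → EuclideanSpace ℝ (Fin d))
    (hgrad : ∀ x, HasGradientAt L (gradL x) x)
    (μR εR : ℝ) (hμ : 0 < μR) (hε0 : 0 ≤ εR) (hεhalf : εR < 1 / 2)
    (T : Set (EuclideanSpace ℝ (Fin d)))
    (hTsub : T ⊆ {z : EuclideanSpace ℝ (Fin d) | ∃ a ∈ C, ∃ b ∈ C, z = a - b})
    (hRGC : ∀ v ∈ {z : EuclideanSpace ℝ (Fin d) | ∃ a ∈ C, ∃ b ∈ C, z = a - b},
      ∀ x ∈ C, ∀ y ∈ C,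
      |⟪v, x - y⟫ - μR * ⟪v, gradL x - gradL y⟫| ≤ εR * ‖v‖ * ‖x - y‖)
    (hopt : ∀ w ∈ T, ‖w‖ ≤ 1 → 0 ≤ ⟪w, gradL βs⟫)
    (proj : EuclideanSpace ℝ (Fin d) → EuclideanSpace ℝ (Fin d))
    (hproj : ∀ u, proj u ∈ C ∧ ∀ q ∈ C, dist u (proj u) ≤ dist u q)
    (hprojT : ∀ z : EuclideanSpace ℝ (Fin d),
      ‖proj (z + βs) - βs‖ ≤ 2 * sSup ((fun w => ⟪w, z⟫) '' {w ∈ T | ‖w‖ ≤ 1}))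
    (β : ℕ → EuclideanSpace ℝ (Fin d)) (hβ0 : β 0 = 0)
    (hiter : ∀ t, β (t + 1) = proj (β t - μR • gradL (β t))) :
    ∀ t, ‖β t - βs‖ ≤ (2 * εR) ^ t * ‖βs‖ := by
  have hβC : ∀ t, β t ∈ C := by
    intro t
    cases t with
    | zero =>
      have := hCcone 0 le_rfl βs hβs
      simpa [hβ0] using this
    | succ n => rw [hiter n]; exact (hproj _).1
  intro t
  induction t with
  | zero => simp [hβ0]
  | succ t ih =>
    set z := β t - μR • gradL (β t) - βs with hzdef
    have hz : β (t + 1) - βs = proj (z + βs) - βs := by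
      rw [hiter, hzdef, sub_add_cancel]
    have key : ‖β (t + 1) - βs‖ ≤ 2 * sSup ((fun w => ⟪w, z⟫) '' {w ∈ T | ‖w‖ ≤ 1}) := by
      rw [hz]; exact hprojT z
    have hsup : sSup ((fun w => ⟪w, z⟫) '' {w ∈ T | ‖w‖ ≤ 1}) ≤ εR * ‖β t - βs‖ := by
      apply Real.sSup_le
      · rintro x ⟨w, ⟨hwT, hwn⟩, rfl⟩
        have hwCC : w ∈ {z : EuclideanSpace ℝ (Fin d) | ∃ a ∈ C, ∃ b ∈ C, z = a - b} :=
          hTsub hwT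
        have hR := hRGC w hwCC (β t) (hβC t) βs hβs
        have h1 : ⟪w, β t - βs⟫ - μR * ⟪w, gradL (β t) - gradL βs⟫ ≤ εR * ‖w‖ * ‖β t - βs‖ :=
          le_of_abs_le hR
        have hopt' := hopt w hwT hwn
        have hwz : ⟪w, z⟫ =
            (⟪w, β t - βs⟫ - μR * ⟪w, gradL (β t) - gradL βs⟫) - μR * ⟪w, gradL βs⟫ := by
          simp [hzdef, inner_sub_right, inner_smul_right]; ring
        dsimp only
        rw [hwz]
        have h2 : εR * ‖w‖ * ‖β t - βs‖ ≤ εR * ‖β t - βs‖ := by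
          have := mul_le_mul_of_nonneg_right (mul_le_mul_of_nonneg_left hwn hε0)
            (norm_nonneg (β t - βs))
          simpa using this
        nlinarith [mul_nonneg hμ.le hopt']
      · positivity
    have hnn : (0:ℝ) ≤ ‖βs‖ := norm_nonneg _
    calc ‖β (t + 1) - βs‖ ≤ 2 * (εR * ‖β t - βs‖) := by linarith
      _ ≤ 2 * εR * ((2 * εR) ^ t * ‖βs‖) := by nlinarith
      _ = (2 * εR) ^ (t + 1) * ‖βs‖ := by ring
end
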